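/- Let M be an n×n irreducible matrix with nonnegative integer entries whose Perron–Frobenius eigenvalue equals 1. Then M is a permutation matrix. -/

import Mathlib

open Matrix Polynomial

lemma root_charpoly_mem_spectrum {n : ℕ} (B : Matrix (Fin n) (Fin n) ℂ) {z : ℂ}
    (hz : B.charpoly.IsRoot z) : z ∈ spectrum ℂ B := by
  rw [spectrum.mem_iff]
  intro hunit
  have hdet := (Matrix.isUnit_iff_isUnit_det _).mp hunit
  have heq : (algebraMap ℂ (Matrix (Fin n) (Fin n) ℂ) z - B).det = B.charpoly.eval z := by
    have h := RingHom.map_det (Polynomial.evalRingHom z) (charmatrix B)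
    rw [show eval z B.charpoly = ((evalRingHom z).mapMatrix B.charmatrix).det from h]
    congr 1
    ext i j
    by_cases hij : i = j <;>
      simp [hij, Matrix.algebraMap_matrix_apply, charmatrix_apply, Matrix.sub_apply,
        Matrix.diagonal_apply]
  rw [heq, hz] at hdet
  exact (not_isUnit_zero : ¬ IsUnit (0:ℂ)) hdet

lemma trace_pow_le{n : ℕ} (M : Matrix (Fin n) (Fin n) ℕ)
    (hpf : spectralRadius ℂ (M.map (Nat.cast : ℕ → ℂ)) = 1) (k : ℕ) (hk : 1 ≤ k) :
    (M ^ k).trace ≤ n := by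
  set A := M.map (Nat.cast : ℕ → ℂ) with hA
  -- norms of spectrum of A are ≤ 1
  have hspec : ∀ w ∈ spectrum ℂ A, ‖w‖ ≤ 1 := by
    intro w hw
    have h1 : (‖w‖₊ : ENNReal) ≤ spectralRadius ℂ A :=
      le_iSup₂ (f := fun (k : ℂ) (_ : k ∈ spectrum ℂ A) => (‖k‖₊ : ENNReal)) w hw
    rw [hpf] at h1
    have h2 : ‖w‖₊ ≤ 1 := by exact_mod_cast h1
    exact_mod_cast h2
  -- A ^ k = (M ^ k).map cast
  have hAk : A ^ k = (M ^ k).map (Nat.cast : ℕ → ℂ) := by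
    have := map_pow ((Nat.castRingHom ℂ).mapMatrix) M k
    simpa [RingHom.mapMatrix_apply] using this.symm
  -- trace of A^k is cast of trace of M^k
  have htr : (A ^ k).trace = ((M ^ k).trace : ℂ) := by
    rw [hAk]
    simp [Matrix.trace, Matrix.diag]
  -- roots
  have hroots : (A ^ k).trace = ((A ^ k).charpoly.roots).sum :=
    Matrix.trace_eq_sum_roots_charpoly _
  have hmonic := Matrix.charpoly_monic (A ^ k)
  have hcard : ((A ^ k).charpoly.roots).card = n := by
    have hs := (Polynomial.splits_iff_card_roots).mp (IsAlgClosed.splits (A ^ k).charpoly)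
    rw [hs, Matrix.charpoly_natDegree_eq_dim, Fintype.card_fin]
  have hbound : ∀ z ∈ (A ^ k).charpoly.roots, ‖z‖ ≤ 1 := by
    intro z hzr
    have hz : (A ^ k).charpoly.IsRoot z := isRoot_of_mem_roots hzr
    have hzs : z ∈ spectrum ℂ (A ^ k) := root_charpoly_mem_spectrum _ hz
    rw [spectrum.map_pow_of_pos A (Nat.lt_of_lt_of_le Nat.zero_lt_one hk)] at hzs
    obtain ⟨w, hw, rfl⟩ := hzs
    calc ‖w ^ k‖ = ‖w‖ ^ k := norm_pow w k
      _ ≤ 1 ^ k := pow_le_pow_left₀ (norm_nonneg w) (hspec w hw) k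
      _ = 1 := one_pow k
  -- combine
  have : (((M ^ k).trace : ℝ)) ≤ n := by
    have h1 : ‖(A ^ k).trace‖ ≤ (((A ^ k).charpoly.roots).map norm).sum := by
      rw [hroots]; exact norm_multiset_sum_le _
    have h2 : (((A ^ k).charpoly.roots).map norm).sum ≤
        (((A ^ k).charpoly.roots).map norm).card • (1 : ℝ) := by
      apply Multiset.sum_le_card_nsmul
      intro x hx
      obtain ⟨z, hz, rfl⟩ := Multiset.mem_map.mp hx
      exact hbound z hz
    rw [Multiset.card_map, hcard, nsmul_eq_mul, mul_one] at h2
    have h3 : ‖(A ^ k).trace‖ = (((M ^ k).trace : ℝ)) := by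
      rw [htr]
      simp
    linarith
  exact_mod_cast this

lemma pf_aux_entry_mul_le {n : ℕ} (M : Matrix (Fin n) (Fin n) ℕ) (a b : ℕ) (i j l : Fin n) :
    (M ^ a) i l * (M ^ b) l j ≤ (M ^ (a + b)) i j := by
  rw [pow_add, Matrix.mul_apply]
  exact Finset.single_le_sum (f := fun l => (M ^ a) i l * (M ^ b) l j)
    (fun _ _ => Nat.zero_le _) (Finset.mem_univ l)

theorem pf_eigenvalue_one_perm' (n : ℕ) (hn : 0 < n) (M : Matrix (Fin n) (Fin n) ℕ)
    (hirr : ∀ i j : Fin n, ∃ k : ℕ, 1 ≤ k ∧ 0 < (M ^ k) i j)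
    (htr : ∀ k : ℕ, 1 ≤ k → (M ^ k).trace ≤ n) :
    ∃ σ : Equiv.Perm (Fin n), ∀ i j : Fin n, M i j = if σ i = j then 1 else 0 := by
  -- diagonal entries of powers are ≤ n
  have hdiag : ∀ k : ℕ, 1 ≤ k → ∀ i : Fin n, (M ^ k) i i ≤ n := by
    intro k hk i
    refine le_trans ?_ (htr k hk)
    exact Finset.single_le_sum (f := fun i => (M ^ k) i i)
      (fun _ _ => Nat.zero_le _) (Finset.mem_univ i)
  -- every row is nonzero
  have hrowpos : ∀ i : Fin n, ∃ j, 1 ≤ M i j := by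
    intro i
    obtain ⟨k, hk, hpos⟩ := hirr i i
    obtain ⟨m, rfl⟩ : ∃ m, k = m + 1 := ⟨k - 1, by omega⟩
    by_contra h
    push_neg at h
    simp only [Nat.lt_one_iff] at h
    rw [pow_succ', Matrix.mul_apply] at hpos
    have : ∀ l ∈ Finset.univ, M i l * (M ^ m) l i = 0 := fun l _ => by rw [h l, zero_mul]
    rw [Finset.sum_eq_zero this] at hpos
    exact lt_irrefl 0 hpos
  -- every column is nonzero
  have hcolpos : ∀ j : Fin n, ∃ i, 1 ≤ M i j := by
    intro j
    obtain ⟨k, hk, hpos⟩ := hirr j j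
    obtain ⟨m, rfl⟩ : ∃ m, k = m + 1 := ⟨k - 1, by omega⟩
    by_contra h
    push_neg at h
    simp only [Nat.lt_one_iff] at h
    rw [pow_succ, Matrix.mul_apply] at hpos
    have : ∀ l ∈ Finset.univ, (M ^ m) j l * M l j = 0 := fun l _ => by rw [h l, mul_zero]
    rw [Finset.sum_eq_zero this] at hpos
    exact lt_irrefl 0 hpos
  -- each row sums to at most 1
  have hrow1 : ∀ i : Fin n, ∑ j, M i j ≤ 1 := by
    intro i₀
    by_contra hcon
    push_neg at hcon
    have hsum2 : 2 ≤ ∑ j, M i₀ j := hcon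
    -- find L ≥ 1 with (M^L) i₀ i₀ ≥ 2
    have hL : ∃ L : ℕ, 1 ≤ L ∧ 2 ≤ (M ^ L) i₀ i₀ := by
      by_cases hbig : ∃ j, 2 ≤ M i₀ j
      · obtain ⟨j, hj⟩ := hbig
        obtain ⟨k, hk, hkpos⟩ := hirr j i₀
        refine ⟨1 + k, by omega, ?_⟩
        have h1 := pf_aux_entry_mul_le M 1 k i₀ i₀ j
        rw [pow_one] at h1
        calc 2 = 2 * 1 := by ring
          _ ≤ M i₀ j * (M ^ k) j i₀ := Nat.mul_le_mul hj hkpos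
          _ ≤ (M ^ (1 + k)) i₀ i₀ := h1
      · push_neg at hbig
        -- two distinct positive entries
        obtain ⟨j₁, hj₁⟩ : ∃ j, 1 ≤ M i₀ j := by
          by_contra h
          push_neg at h
          simp only [Nat.lt_one_iff] at h
          rw [Finset.sum_eq_zero (fun j _ => h j)] at hsum2
          omega
        obtain ⟨j₂, hj₂ne, hj₂⟩ : ∃ j₂, j₂ ≠ j₁ ∧ 1 ≤ M i₀ j₂ := by
          have herase : M i₀ j₁ + ∑ j ∈ Finset.univ.erase j₁, M i₀ j = ∑ j, M i₀ j :=
            Finset.add_sum_erase _ _ (Finset.mem_univ j₁)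
          have h1 : 1 ≤ ∑ j ∈ Finset.univ.erase j₁, M i₀ j := by
            have := hbig j₁
            omega
          by_contra h
          push_neg at h
          have : ∀ j ∈ Finset.univ.erase j₁, M i₀ j = 0 := by
            intro j hj
            have hne := Finset.ne_of_mem_erase hj
            have := h j hne
            omega
          rw [Finset.sum_eq_zero this] at h1
          omega
        obtain ⟨k₁, hk₁, hk₁pos⟩ := hirr j₁ i₀
        obtain ⟨k₂, hk₂, hk₂pos⟩ := hirr j₂ i₀
        set a := 1 + k₁ with ha
        set b := 1 + k₂ with hb
        have hA : 1 ≤ (M ^ a) i₀ i₀ := by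
          have h1 := pf_aux_entry_mul_le M 1 k₁ i₀ i₀ j₁
          rw [pow_one] at h1
          calc 1 = 1 * 1 := by ring
            _ ≤ M i₀ j₁ * (M ^ k₁) j₁ i₀ := Nat.mul_le_mul hj₁ hk₁pos
            _ ≤ (M ^ a) i₀ i₀ := h1
        have hB : 1 ≤ (M ^ b) i₀ i₀ := by
          have h1 := pf_aux_entry_mul_le M 1 k₂ i₀ i₀ j₂
          rw [pow_one] at h1
          calc 1 = 1 * 1 := by ring
            _ ≤ M i₀ j₂ * (M ^ k₂) j₂ i₀ := Nat.mul_le_mul hj₂ hk₂pos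
            _ ≤ (M ^ b) i₀ i₀ := h1
        have h1 : 1 ≤ (M ^ (k₁ + b)) j₁ i₀ :=
          le_trans (by calc 1 = 1 * 1 := by ring
            _ ≤ (M ^ k₁) j₁ i₀ * (M ^ b) i₀ i₀ := Nat.mul_le_mul hk₁pos hB)
            (pf_aux_entry_mul_le M k₁ b j₁ i₀ i₀)
        have h2 : 1 ≤ (M ^ (k₂ + a)) j₂ i₀ :=
          le_trans (by calc 1 = 1 * 1 := by ring
            _ ≤ (M ^ k₂) j₂ i₀ * (M ^ a) i₀ i₀ := Nat.mul_le_mul hk₂pos hA)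
            (pf_aux_entry_mul_le M k₂ a j₂ i₀ i₀)
        refine ⟨1 + (k₁ + b), by omega, ?_⟩
        have hrw : (M ^ (1 + (k₁ + b))) i₀ i₀ = ∑ l, M i₀ l * (M ^ (k₁ + b)) l i₀ := by
          rw [pow_add, pow_one, Matrix.mul_apply]
        rw [hrw]
        have hpair : M i₀ j₁ * (M ^ (k₁ + b)) j₁ i₀ + M i₀ j₂ * (M ^ (k₁ + b)) j₂ i₀ ≤
            ∑ l, M i₀ l * (M ^ (k₁ + b)) l i₀ :=
          le_trans (le_of_eq (Finset.sum_pair (f := fun l => M i₀ l * (M ^ (k₁ + b)) l i₀)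
              (Ne.symm hj₂ne)).symm)
            (Finset.sum_le_sum_of_subset (Finset.subset_univ _))
        have heq : k₁ + b = k₂ + a := by omega
        have h2' : 1 ≤ (M ^ (k₁ + b)) j₂ i₀ := by rw [heq]; exact h2
        have t1 : 1 ≤ M i₀ j₁ * (M ^ (k₁ + b)) j₁ i₀ := by
          calc 1 = 1 * 1 := by ring
            _ ≤ _ := Nat.mul_le_mul hj₁ h1
        have t2 : 1 ≤ M i₀ j₂ * (M ^ (k₁ + b)) j₂ i₀ := by
          calc 1 = 1 * 1 := by ring
            _ ≤ _ := Nat.mul_le_mul hj₂ h2'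
        omega
    obtain ⟨L, hL1, hL2⟩ := hL
    -- exponential growth
    have hgrow : ∀ m : ℕ, 2 ^ m ≤ (M ^ (L * m)) i₀ i₀ := by
      intro m
      induction m with
      | zero => simp [Matrix.one_apply_eq]
      | succ m ih =>
        have : (M ^ (L * m)) i₀ i₀ * (M ^ L) i₀ i₀ ≤ (M ^ (L * m + L)) i₀ i₀ :=
          pf_aux_entry_mul_le M (L * m) L i₀ i₀ i₀
        calc 2 ^ (m + 1) = 2 ^ m * 2 := by ring
          _ ≤ (M ^ (L * m)) i₀ i₀ * (M ^ L) i₀ i₀ := Nat.mul_le_mul ih hL2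
          _ ≤ (M ^ (L * m + L)) i₀ i₀ := this
          _ = (M ^ (L * (m + 1))) i₀ i₀ := by ring_nf
    have hfin := hgrow n
    have hle := hdiag (L * n) (Nat.mul_pos hL1 hn) i₀
    have := Nat.lt_two_pow_self (n := n)
    omega
  -- each row sums to exactly 1
  have hsum : ∀ i : Fin n, ∑ j, M i j = 1 := by
    intro i
    refine le_antisymm (hrow1 i) ?_
    obtain ⟨j, hj⟩ := hrowpos i
    exact le_trans hj (Finset.single_le_sum (f := fun j => M i j)
      (fun _ _ => Nat.zero_le _) (Finset.mem_univ j))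
  -- each column sums to exactly 1
  have hcol1 : ∀ j : Fin n, ∑ i, M i j = 1 := by
    have htot : ∑ j, ∑ i, M i j = n := by
      rw [Finset.sum_comm]
      simp [hsum]
    have hge : ∀ j : Fin n, 1 ≤ ∑ i, M i j := by
      intro j
      obtain ⟨i, hi⟩ := hcolpos j
      exact le_trans hi (Finset.single_le_sum (f := fun i => M i j)
        (fun _ _ => Nat.zero_le _) (Finset.mem_univ i))
    intro j₀
    by_contra hcon
    have h2 : 2 ≤ ∑ i, M i j₀ := by
      have := hge j₀; omega
    have herase : (∑ i, M i j₀) + ∑ j ∈ Finset.univ.erase j₀, ∑ i, M i j = ∑ j, ∑ i, M i j :=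
      Finset.add_sum_erase _ (fun j => ∑ i, M i j) (Finset.mem_univ j₀)
    have hcardrest : (n - 1) ≤ ∑ j ∈ Finset.univ.erase j₀, ∑ i, M i j := by
      have := Finset.card_nsmul_le_sum (Finset.univ.erase j₀) (fun j => ∑ i, M i j) 1
        (fun j _ => hge j)
      simpa [Finset.card_erase_of_mem, Finset.card_univ] using this
    omega
  -- define the function
  choose f hf using hrowpos
  have key : ∀ i j, M i j = if f i = j then 1 else 0 := by
    intro i j
    by_cases h : f i = j
    · subst h
      rw [if_pos rfl]
      have h1 : M i (f i) ≤ 1 := by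
        rw [← hsum i]
        exact Finset.single_le_sum (f := fun j => M i j)
          (fun _ _ => Nat.zero_le _) (Finset.mem_univ (f i))
      have h0 := hf i
      omega
    · rw [if_neg h]
      have hpair : M i (f i) + M i j ≤ ∑ j', M i j' :=
        le_trans (le_of_eq (Finset.sum_pair (f := fun j' => M i j') h).symm)
          (Finset.sum_le_sum_of_subset (Finset.subset_univ _))
      have := hf i
      rw [hsum i] at hpair
      omega
  -- injectivity
  have hinj : Function.Injective f := by
    intro i₁ i₂ h12
    by_contra hne
    have hpair : M i₁ (f i₁) + M i₂ (f i₁) ≤ ∑ i, M i (f i₁) :=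
      le_trans (le_of_eq (Finset.sum_pair (f := fun i => M i (f i₁)) hne).symm)
        (Finset.sum_le_sum_of_subset (Finset.subset_univ _))
    rw [hcol1 (f i₁)] at hpair
    have h1 := hf i₁
    have h2 := hf i₂
    rw [← h12] at h2
    omega
  exact ⟨Equiv.ofBijective f ((Finite.injective_iff_bijective).mp hinj), fun i j => by
    simpa using key i j⟩

/-- An irreducible nonnegative integer matrix whose Perron–Frobenius eigenvalue
(spectral radius) equals `1` is a permutation matrix. -/
theorem pf_eigenvalue_one_perm (n : ℕ) (hn : 0 < n) (M : Matrix (Fin n) (Fin n) ℕ)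
    (hirr : ∀ i j : Fin n, ∃ k : ℕ, 1 ≤ k ∧ 0 < (M ^ k) i j)
    (hpf : spectralRadius ℂ (M.map (Nat.cast : ℕ → ℂ)) = 1) :
    ∃ σ : Equiv.Perm (Fin n), ∀ i j : Fin n, M i j = if σ i = j then 1 else 0 :=
  pf_eigenvalue_one_perm' n hn M hirr (trace_pow_le M hpf)
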